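/- Let X be a geodesic δ-hyperbolic metric space, let A and B be isometries of X, and let L_A, L_B : ℝ → X be geodesic lines such that dist(A x, L_A(ℝ)) ≤ 2δ and dist(A⁻¹ x, L_A(ℝ)) ≤ 2δ for every x ∈ L_A(ℝ), and dist(B x, L_B(ℝ)) ≤ 2δ and dist(B⁻¹ x, L_B(ℝ)) ≤ 2δ for every x ∈ L_B(ℝ). Suppose there exist x_A ∈ L_A(ℝ) and x_B ∈ L_B(ℝ) with d(x_A, x_B) = dist(L_A(ℝ), L_B(ℝ)), and assume dist(L_A(ℝ), L_B(ℝ)) > 50δ, l_S(A) > 50δ and l_S(B) > 50δ. Then l_S(AB) ≥ l_S(A) + l_S(B) − 144δ. -/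

import Mathlib

open Metric Filter Set Topology

/-- The Gromov product `(x|y)_z = ½(d(z,x)+d(z,y)−d(x,y))`. -/
noncomputable def gromovProd {X : Type*} [MetricSpace X] (x y z : X) : ℝ :=
  (dist z x + dist z y - dist x y) / 2

/-- A parametrized geodesic segment from `x` to `y` (defined on `[0, dist x y]`). -/
def IsGeodesicSegment {X : Type*} [MetricSpace X] (x y : X) (f : ℝ → X) : Prop :=
  f 0 = x ∧ f (dist x y) = y ∧
    ∀ s ∈ Set.Icc (0 : ℝ) (dist x y), ∀ t ∈ Set.Icc (0 : ℝ) (dist x y),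
      dist (f s) (f t) = |s - t|

/-- The metric space `X` is geodesic: any two points are joined by a geodesic segment. -/
def GeodesicMetricSpace (X : Type*) [MetricSpace X] : Prop :=
  ∀ x y : X, ∃ f : ℝ → X, IsGeodesicSegment x y f

/-- `X` is δ-hyperbolic in the sense of Rips: every geodesic triangle is δ-thin,
i.e. each side is contained in the δ-neighbourhood of the union of the other two. -/
def RipsHyperbolic (X : Type*) [MetricSpace X] (δ : ℝ) : Prop :=
  ∀ (x y z : X) (f g h : ℝ → X),
    IsGeodesicSegment x y f → IsGeodesicSegment y z g → IsGeodesicSegment z x h →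
      ∀ s ∈ Set.Icc (0 : ℝ) (dist x y),
        infDist (f s) (g '' Set.Icc 0 (dist y z) ∪ h '' Set.Icc 0 (dist z x)) ≤ δ

/-- A (parametrized) geodesic line in `X`. -/
def IsGeodesicLine {X : Type*} [MetricSpace X] (L : ℝ → X) : Prop :=
  ∀ s t : ℝ, dist (L s) (L t) = |s - t|

/-- A (parametrized) geodesic ray in `X` (parametrized on `[0,∞)`). -/
def IsGeodesicRay {X : Type*} [MetricSpace X] (r : ℝ → X) : Prop :=
  ∀ s t : ℝ, 0 ≤ s → 0 ≤ t → dist (r s) (r t) = |s - t|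

/-- `L` is a geodesic from `A⁻` to `A⁺` (oriented toward `A⁺`): it is a geodesic line
such that, with `x₀ = L 0`, the Gromov products `(Aⁿx₀ | L t)_{x₀}` tend to `+∞` as
`min(n,t) → +∞`, and `(A⁻ⁿx₀ | L (−t))_{x₀}` tend to `+∞` as `min(n,t) → +∞`. -/
def IsGeodesicFromTo {X : Type*} [MetricSpace X] (A : X ≃ᵢ X) (L : ℝ → X) : Prop :=
  IsGeodesicLine L ∧
    (∀ M : ℝ, ∃ N : ℝ, ∀ (n : ℕ) (t : ℝ), N ≤ (n : ℝ) → N ≤ t →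
      M ≤ gromovProd ((A ^ n) (L 0)) (L t) (L 0)) ∧
    (∀ M : ℝ, ∃ N : ℝ, ∀ (n : ℕ) (t : ℝ), N ≤ (n : ℝ) → N ≤ t →
      M ≤ gromovProd ((A⁻¹ ^ n) (L 0)) (L (-t)) (L 0))

/-- An element of `F₂` is primitive if it is the image of a generator under an
automorphism of `F₂` (equivalently, it belongs to some free basis). -/
def Primitive (γ : FreeGroup (Fin 2)) : Prop :=
  ∃ φ : FreeGroup (Fin 2) ≃* FreeGroup (Fin 2), φ (FreeGroup.of 0) = γ

/-- The (reduced) word length of an element of `F₂`. -/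
noncomputable def wordLength (γ : FreeGroup (Fin 2)) : ℕ := γ.toWord.length

/-- The cyclically reduced word length `‖γ‖`: the minimum of the word lengths
of the conjugates of `γ`. -/
noncomputable def cycLength (γ : FreeGroup (Fin 2)) : ℕ :=
  sInf (Set.range fun g : FreeGroup (Fin 2) => wordLength (g * γ * g⁻¹))

/-- `γ` is cyclically reduced if its word length equals its cyclically reduced length. -/
def CyclicallyReduced (γ : FreeGroup (Fin 2)) : Prop :=
  wordLength γ = cycLength γ

section AuxGP
variable {X : Type*} [MetricSpace X]

lemma le_of_forall_pos_le_add' {a b : ℝ} (h : ∀ ε : ℝ, 0 < ε → a ≤ b + ε) : a ≤ b := by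
  by_contra hc; push_neg at hc
  have := h ((a - b)/2) (by linarith); linarith

lemma gromovProd_nonneg (x y z : X) : 0 ≤ gromovProd x y z := by
  have h := dist_triangle x z y
  have h1 : dist x z = dist z x := dist_comm _ _
  unfold gromovProd; linarith

lemma gromovProd_le_left (x y z : X) : gromovProd x y z ≤ dist z x := by
  have h := dist_triangle z x y
  unfold gromovProd; linarith

lemma gromovProd_le_right (x y z : X) : gromovProd x y z ≤ dist z y := by
  have h := dist_triangle z y x
  have h1 : dist y x = dist x y := dist_comm _ _
  unfold gromovProd; linarith

lemma gromovProd_comm (x y z : X) : gromovProd x y z = gromovProd y x z := by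
  unfold gromovProd; rw [dist_comm x y]; ring

lemma gromovProd_add (x y z : X) : gromovProd x y z + gromovProd x z y = dist y z := by
  unfold gromovProd
  rw [dist_comm z x, dist_comm z y, dist_comm y x]; ring

lemma dist_eq_gromov (x y z : X) : dist x y = dist z x + dist z y - 2 * gromovProd x y z := by
  unfold gromovProd; ring

lemma gromovProd_le_add_dist (x x' y z : X) :
    gromovProd x' y z ≤ gromovProd x y z + dist x x' := by
  have h1 := dist_triangle z x x'
  have h2 := dist_triangle x x' y
  unfold gromovProd; linarith

lemma gromovProd_iso (e : X ≃ᵢ X) (x y z : X) :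
    gromovProd (e x) (e y) (e z) = gromovProd x y z := by
  unfold gromovProd; rw [e.dist_eq, e.dist_eq, e.dist_eq]

lemma seg_dist_left {x y : X} {f : ℝ → X} (hf : IsGeodesicSegment x y f) {s : ℝ}
    (hs : s ∈ Set.Icc 0 (dist x y)) : dist x (f s) = s := by
  obtain ⟨h0, _, hd⟩ := hf
  have := hd 0 ⟨le_refl _, dist_nonneg⟩ s hs
  rw [h0] at this
  rw [this, abs_of_nonpos (by linarith [hs.1]), neg_sub, sub_zero]

lemma seg_dist_right {x y : X} {f : ℝ → X} (hf : IsGeodesicSegment x y f) {s : ℝ}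
    (hs : s ∈ Set.Icc 0 (dist x y)) : dist (f s) y = dist x y - s := by
  obtain ⟨_, h1, hd⟩ := hf
  have := hd s hs (dist x y) ⟨dist_nonneg, le_refl _⟩
  rw [h1] at this
  rw [this, abs_of_nonpos (by linarith [hs.2])]; ring

lemma gromovProd_le_dist_geodesic {y z x : X} {g : ℝ → X} (hg : IsGeodesicSegment y z g)
    {s : ℝ} (hs : s ∈ Set.Icc 0 (dist y z)) : gromovProd y z x ≤ dist x (g s) := by
  have hy : dist y (g s) = s := seg_dist_left hg hs
  have hz : dist (g s) z = dist y z - s := seg_dist_right hg hs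
  have t1 : dist x y ≤ dist x (g s) + s := by
    have := dist_triangle x (g s) y
    rw [dist_comm (g s) y, hy] at this; linarith
  have t2 : dist x z ≤ dist x (g s) + (dist y z - s) := by
    have := dist_triangle x (g s) z
    rw [hz] at this; linarith
  unfold gromovProd; linarith

lemma line_seg {L : ℝ → X} (hL : IsGeodesicLine L) (a b : ℝ) :
    ∃ f : ℝ → X, IsGeodesicSegment (L a) (L b) f ∧ ∀ s : ℝ, f s ∈ Set.range L := by
  rcases le_total a b with hab | hab
  · refine ⟨fun t => L (a + t), ⟨by simp, ?_, ?_⟩, fun s => ⟨a + s, rfl⟩⟩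
    · have hd : dist (L a) (L b) = b - a := by
        rw [hL a b, abs_of_nonpos (by linarith)]; ring
      rw [hd]; congr 1; ring
    · intro s _ t _
      rw [hL]; congr 1; ring
  · refine ⟨fun t => L (a - t), ⟨by simp, ?_, ?_⟩, fun s => ⟨a - s, rfl⟩⟩
    · have hd : dist (L a) (L b) = a - b := by
        rw [hL a b, abs_of_nonneg (by linarith)]
      rw [hd]; congr 1; ring
    · intro s _ t _
      rw [hL, abs_sub_comm]; congr 1; ring


lemma exists_close_of_infDist_le {S : Set X} (hS : S.Nonempty) {p : X} {d ε : ℝ}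
    (h : infDist p S ≤ d) (hε : 0 < ε) : ∃ q ∈ S, dist p q < d + ε :=
  (infDist_lt_iff hS).mp (lt_of_le_of_lt h (by linarith))

lemma four_point {δ : ℝ} (hδ : 0 ≤ δ) (hgeo : GeodesicMetricSpace X)
    (hhyp : RipsHyperbolic X δ) (w x y z : X) :
    min (gromovProd x y w) (gromovProd y z w) ≤ gromovProd x z w + 3 * δ := by
  apply le_of_forall_pos_le_add'
  intro ε hε
  set ε3 := ε / 3 with hε3
  have hε3' : 0 < ε3 := by positivity
  obtain ⟨f, hf⟩ := hgeo x z
  obtain ⟨g, hg⟩ := hgeo z w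
  obtain ⟨h, hh⟩ := hgeo w x
  obtain ⟨g', hg'⟩ := hgeo z y
  obtain ⟨h', hh'⟩ := hgeo y x
  set s := gromovProd w z x with hs_def
  have hs : s ∈ Set.Icc 0 (dist x z) := ⟨gromovProd_nonneg _ _ _, gromovProd_le_right _ _ _⟩
  have hdxp : dist x (f s) = s := seg_dist_left hf hs
  have hdpz : dist (f s) z = dist x z - s := seg_dist_right hf hs
  have hne1 : (g '' Set.Icc 0 (dist z w) ∪ h '' Set.Icc 0 (dist w x)).Nonempty :=
    ⟨g 0, Or.inl ⟨0, ⟨le_refl _, dist_nonneg⟩, rfl⟩⟩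
  obtain ⟨q1, hq1mem, hq1d⟩ := exists_close_of_infDist_le hne1
    (hhyp x z w f g h hf hg hh s hs) hε3'
  have claim1 : dist w (f s) ≤ gromovProd x z w + 2 * (δ + ε3) := by
    have key : dist z w - (dist x z - s) = gromovProd x z w := by
      rw [hs_def]; unfold gromovProd
      rw [dist_comm z w, dist_comm x w, dist_comm x z]; ring
    have key2 : dist w x - s = gromovProd x z w := by
      rw [hs_def]; unfold gromovProd
      rw [dist_comm w x, dist_comm x w, dist_comm x z]; ring
    rcases hq1mem with ⟨r, hr, rfl⟩ | ⟨r, hr, rfl⟩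
    · -- q1 = g r on [z,w]
      have t1 : dist z (g r) = r := seg_dist_left hg hr
      have t2 : dist (g r) w = dist z w - r := seg_dist_right hg hr
      have tri1 := dist_triangle z (g r) (f s)
      have tri2 := dist_triangle w (g r) (f s)
      have c1 : dist z (f s) = dist (f s) z := dist_comm _ _
      have c2 : dist w (g r) = dist (g r) w := dist_comm _ _
      have c3 : dist (g r) (f s) = dist (f s) (g r) := dist_comm _ _
      linarith
    · -- q1 = h r on [w,x]
      have t1 : dist w (h r) = r := seg_dist_left hh hr
      have t2 : dist (h r) x = dist w x - r := seg_dist_right hh hr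
      have tri1 := dist_triangle x (h r) (f s)
      have tri2 := dist_triangle w (h r) (f s)
      have c1 : dist x (h r) = dist (h r) x := dist_comm _ _
      have c2 : dist x (f s) = dist (f s) x := dist_comm _ _
      have c3 : dist (h r) (f s) = dist (f s) (h r) := dist_comm _ _
      linarith
  have hne2 : (g' '' Set.Icc 0 (dist z y) ∪ h' '' Set.Icc 0 (dist y x)).Nonempty :=
    ⟨g' 0, Or.inl ⟨0, ⟨le_refl _, dist_nonneg⟩, rfl⟩⟩
  obtain ⟨q2, hq2mem, hq2d⟩ := exists_close_of_infDist_le hne2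
    (hhyp x z y f g' h' hf hg' hh' s hs) hε3'
  have claim2 : min (gromovProd x y w) (gromovProd y z w) ≤ dist w (f s) + (δ + ε3) := by
    have hq2 : dist w q2 ≤ dist w (f s) + (δ + ε3) := by
      have := dist_triangle w (f s) q2; linarith
    rcases hq2mem with ⟨r, hr, rfl⟩ | ⟨r, hr, rfl⟩
    · have hle := gromovProd_le_dist_geodesic hg' hr (x := w)
      calc min (gromovProd x y w) (gromovProd y z w) ≤ gromovProd y z w := min_le_right _ _
        _ = gromovProd z y w := gromovProd_comm _ _ _
        _ ≤ dist w (g' r) := hle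
        _ ≤ dist w (f s) + (δ + ε3) := hq2
    · have hle := gromovProd_le_dist_geodesic hh' hr (x := w)
      calc min (gromovProd x y w) (gromovProd y z w) ≤ gromovProd x y w := min_le_left _ _
        _ = gromovProd y x w := gromovProd_comm _ _ _
        _ ≤ dist w (h' r) := hle
        _ ≤ dist w (f s) + (δ + ε3) := hq2
  calc min (gromovProd x y w) (gromovProd y z w) ≤ dist w (f s) + (δ + ε3) := claim2
    _ ≤ gromovProd x z w + 2 * (δ + ε3) + (δ + ε3) := by linarith [claim1]
    _ = gromovProd x z w + 3 * δ + ε := by rw [hε3]; ring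

lemma bridge0 {δ : ℝ} (hδ : 0 ≤ δ) (hgeo : GeodesicMetricSpace X)
    (hhyp : RipsHyperbolic X δ) {L : ℝ → X} (hL : IsGeodesicLine L)
    {xA : X} (hxA : xA ∈ Set.range L) (xB : X)
    (hmin : ∀ q ∈ Set.range L, dist xA xB ≤ dist q xB)
    {u : X} (hu : u ∈ Set.range L) :
    gromovProd xB u xA ≤ 3 * δ := by
  by_contra hcon
  push_neg at hcon
  set s := gromovProd xB u xA with hs_def
  set η := (s - 3 * δ) / 3 with hη
  have hη0 : 0 < η := by rw [hη]; linarith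
  set s₀ := s - 2 * δ - η with hs₀
  have hs0_nonneg : 0 ≤ s₀ := by rw [hs₀, hη]; linarith
  have hsD : s ≤ dist xA xB := gromovProd_le_left _ _ _
  have hs0D : s₀ ≤ dist xA xB := by rw [hs₀]; linarith
  obtain ⟨f, hf⟩ := hgeo xA xB
  obtain ⟨g, hg⟩ := hgeo xB u
  obtain ⟨ta, hta⟩ := hxA
  obtain ⟨tu, htu⟩ := hu
  obtain ⟨h, hh, hhim⟩ := line_seg hL tu ta
  rw [hta, htu] at hh
  have hs0mem : s₀ ∈ Set.Icc 0 (dist xA xB) := ⟨hs0_nonneg, hs0D⟩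
  have hne : (g '' Set.Icc 0 (dist xB u) ∪ h '' Set.Icc 0 (dist u xA)).Nonempty :=
    ⟨g 0, Or.inl ⟨0, ⟨le_refl _, dist_nonneg⟩, rfl⟩⟩
  obtain ⟨q, hqmem, hqd⟩ := exists_close_of_infDist_le hne
    (hhyp xA xB u f g h hf hg hh s₀ hs0mem) hη0
  have hdxp : dist xA (f s₀) = s₀ := seg_dist_left hf hs0mem
  have hdpB : dist (f s₀) xB = dist xA xB - s₀ := seg_dist_right hf hs0mem
  rcases hqmem with ⟨r, hr, rfl⟩ | ⟨r, hr, rfl⟩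
  · -- q on [xB, u]: contradicts dist xA · ≥ s
    have hge : gromovProd xB u xA ≤ dist xA (g r) := gromovProd_le_dist_geodesic hg hr
    have tri := dist_triangle xA (f s₀) (g r)
    have : s ≤ s₀ + (δ + η) := by rw [hs_def]; linarith
    rw [hs₀] at this; linarith
  · -- q on [u, xA] ⊆ L: contradicts minimality
    have hqL : h r ∈ Set.range L := hhim r
    have hminq := hmin (h r) hqL
    have tri := dist_triangle (h r) (f s₀) xB
    have c1 : dist (h r) (f s₀) = dist (f s₀) (h r) := dist_comm _ _
    have : s₀ ≤ δ + η := by linarith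
    rw [hs₀, hη] at this; linarith

lemma bridge_generic {δ : ℝ} (hδ : 0 ≤ δ)
    (h4 : ∀ w x y z : X, min (gromovProd x y w) (gromovProd y z w) ≤ gromovProd x z w + 3 * δ)
    {SA SB : Set X} {xA xB : X} (hxA : xA ∈ SA) (hxB : xB ∈ SB)
    (hbrA : ∀ u ∈ SA, gromovProd xB u xA ≤ 3 * δ)
    (hbrB : ∀ v ∈ SB, gromovProd xA v xB ≤ 3 * δ)
    (hfar : 50 * δ < dist xA xB)
    {u v : X} (hu : infDist u SA ≤ 2 * δ) (hv : infDist v SB ≤ 2 * δ) :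
    gromovProd u v xA ≤ 10 * δ := by
  have step1 : ∀ u0 ∈ SA, ∀ v0 ∈ SB, gromovProd u0 v0 xA ≤ 6 * δ := by
    intro u0 hu0 v0 hv0
    have hmin4 := h4 xA u0 v0 xB
    have h1 : gromovProd u0 xB xA ≤ 3 * δ := by
      rw [gromovProd_comm]; exact hbrA u0 hu0
    have h2 : gromovProd v0 xB xA + gromovProd v0 xA xB = dist xB xA := gromovProd_add _ _ _
    have h3 : gromovProd v0 xA xB ≤ 3 * δ := by
      rw [gromovProd_comm]; exact hbrB v0 hv0
    have h4' : gromovProd v0 xB xA > 6 * δ := by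
      rw [dist_comm xB xA] at h2; linarith
    rcases le_total (gromovProd u0 v0 xA) (gromovProd v0 xB xA) with hc | hc
    · rw [min_eq_left hc] at hmin4; linarith
    · rw [min_eq_right hc] at hmin4; linarith
  apply le_of_forall_pos_le_add'
  intro ε hε
  have hε2 : 0 < ε / 2 := by positivity
  obtain ⟨u0, hu0S, hu0d⟩ := exists_close_of_infDist_le ⟨xA, hxA⟩ hu hε2
  obtain ⟨v0, hv0S, hv0d⟩ := exists_close_of_infDist_le ⟨xB, hxB⟩ hv hε2
  have l1 : gromovProd u v xA ≤ gromovProd u0 v xA + dist u0 u := gromovProd_le_add_dist _ _ _ _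
  have l2 : gromovProd u0 v xA ≤ gromovProd u0 v0 xA + dist v0 v := by
    rw [gromovProd_comm u0 v xA, gromovProd_comm u0 v0 xA]
    exact gromovProd_le_add_dist _ _ _ _
  have c1 : dist u0 u = dist u u0 := dist_comm _ _
  have c2 : dist v0 v = dist v v0 := dist_comm _ _
  have := step1 u0 hu0S v0 hv0S
  linarith

lemma chain_lemma {δ' K : ℝ} (hK : 0 ≤ K) (hδ' : 0 ≤ δ')
    (h4 : ∀ w x y z : X, min (gromovProd x y w) (gromovProd y z w) ≤ gromovProd x z w + δ')
    (p : ℕ → X) (m : ℕ)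
    (hd : ∀ i, i + 1 ≤ m → 2 * K + 2 * δ' < dist (p i) (p (i + 1)))
    (hprod : ∀ i, i + 2 ≤ m → gromovProd (p i) (p (i + 2)) (p (i + 1)) ≤ K) :
    (∑ i ∈ Finset.range m, dist (p i) (p (i + 1))) - 2 * m * (K + δ') ≤ dist (p 0) (p m) := by
  rcases Nat.eq_zero_or_pos m with rfl | hm
  · simp
  -- strengthened induction
  have main : ∀ i, i + 1 ≤ m →
      gromovProd (p 0) (p (i + 1)) (p i) ≤ K + δ' ∧
      (∑ j ∈ Finset.range (i + 1), dist (p j) (p (j + 1))) - 2 * i * (K + δ')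
        ≤ dist (p 0) (p (i + 1)) := by
    intro i
    induction i with
    | zero =>
      intro _
      constructor
      · have : gromovProd (p 0) (p 1) (p 0) = 0 := by
          unfold gromovProd; simp [dist_comm]
        rw [this]; linarith
      · simp
    | succ i ih =>
      intro hile
      obtain ⟨ihp, ihd⟩ := ih (by omega)
      have hstep : gromovProd (p 0) (p (i + 2)) (p (i + 1)) ≤ K + δ' := by
        have hmin4 := h4 (p (i + 1)) (p i) (p 0) (p (i + 2))
        have hKbound : gromovProd (p i) (p (i + 2)) (p (i + 1)) ≤ K := hprod i hile
        have hid : gromovProd (p 0) (p i) (p (i + 1)) + gromovProd (p 0) (p (i + 1)) (p i)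
            = dist (p i) (p (i + 1)) := gromovProd_add _ _ _
        have hdist := hd i (by omega)
        have hlarge : gromovProd (p i) (p 0) (p (i + 1)) > K + δ' := by
          rw [gromovProd_comm]; linarith
        rcases le_total (gromovProd (p i) (p 0) (p (i + 1)))
            (gromovProd (p 0) (p (i + 2)) (p (i + 1))) with hc | hc
        · rw [min_eq_left hc] at hmin4; linarith
        · rw [min_eq_right hc] at hmin4; linarith
      refine ⟨hstep, ?_⟩
      have hexp : dist (p 0) (p (i + 2)) =
          dist (p (i + 1)) (p 0) + dist (p (i + 1)) (p (i + 2))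
            - 2 * gromovProd (p 0) (p (i + 2)) (p (i + 1)) := dist_eq_gromov _ _ _
      rw [Finset.sum_range_succ]
      have c1 : dist (p (i + 1)) (p 0) = dist (p 0) (p (i + 1)) := dist_comm _ _
      push_cast
      linarith
  obtain ⟨-, hfinal⟩ := main (m - 1) (by omega)
  have : m - 1 + 1 = m := by omega
  rw [this] at hfinal
  have : (2 : ℝ) * (m - 1 : ℕ) * (K + δ') ≤ 2 * m * (K + δ') := by
    have : ((m - 1 : ℕ) : ℝ) ≤ (m : ℝ) := by exact_mod_cast Nat.sub_le m 1
    nlinarith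
  linarith

lemma stable_norm_le (A : X ≃ᵢ X) (x₀ y : X) {l : ℝ}
    (hl : Tendsto (fun n : ℕ => dist ((A ^ n) x₀) x₀ / n) atTop (𝓝 l)) :
    l ≤ dist y (A y) := by
  have key : ∀ n : ℕ, dist ((A ^ n) y) y ≤ n * dist y (A y) := by
    intro n
    induction n with
    | zero => simp
    | succ n ih =>
      have hpow : (A ^ (n + 1)) y = (A ^ n) (A y) := by rw [pow_succ]; rfl
      have tri := dist_triangle ((A ^ n) (A y)) ((A ^ n) y) y
      have hiso : dist ((A ^ n) (A y)) ((A ^ n) y) = dist (A y) y := (A ^ n).dist_eq _ _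
      have c : dist (A y) y = dist y (A y) := dist_comm _ _
      rw [hpow]
      push_cast
      linarith
  have bound : ∀ᶠ n : ℕ in atTop,
      dist ((A ^ n) x₀) x₀ / n ≤ dist y (A y) + 2 * dist x₀ y / n := by
    filter_upwards [eventually_ge_atTop 1] with n hn
    have hn0 : (0:ℝ) < n := by exact_mod_cast hn
    have hnne : (n:ℝ) ≠ 0 := ne_of_gt hn0
    have hb : dist ((A ^ n) x₀) x₀ ≤ n * dist y (A y) + 2 * dist x₀ y := by
      have tri := dist_triangle4 ((A ^ n) x₀) ((A ^ n) y) y x₀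
      have hiso : dist ((A ^ n) x₀) ((A ^ n) y) = dist x₀ y := (A ^ n).dist_eq _ _
      have c : dist y x₀ = dist x₀ y := dist_comm _ _
      linarith [key n]
    rw [div_le_iff₀ hn0]
    have hexp : (dist y (A y) + 2 * dist x₀ y / n) * n
        = n * dist y (A y) + 2 * dist x₀ y := by field_simp
    rw [hexp]; exact hb
  have h2 : Tendsto (fun n : ℕ => dist y (A y) + 2 * dist x₀ y / n) atTop
      (𝓝 (dist y (A y) + 0)) :=
    tendsto_const_nhds.add (tendsto_const_div_atTop_nhds_zero_nat _)
  have := le_of_tendsto_of_tendsto hl h2 bound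
  simpa using this

end AuxGP

/-- If the axes of `A` and `B` are at distance `> 50δ` from each other and
`l_S(A) > 50δ`, `l_S(B) > 50δ`, then `l_S(AB) ≥ l_S(A) + l_S(B) − 144δ`. -/
theorem stable_norm_product_far_axes
    {X : Type*} [MetricSpace X] (δ : ℝ) (hδ : 0 ≤ δ)
    (hgeo : GeodesicMetricSpace X) (hhyp : RipsHyperbolic X δ)
    (x₀ : X) (A B : X ≃ᵢ X) (LA LB : ℝ → X)
    (hLA : IsGeodesicLine LA) (hLB : IsGeodesicLine LB)
    (hAinv : ∀ x ∈ Set.range LA,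
      infDist (A x) (Set.range LA) ≤ 2 * δ ∧ infDist (A⁻¹ x) (Set.range LA) ≤ 2 * δ)
    (hBinv : ∀ x ∈ Set.range LB,
      infDist (B x) (Set.range LB) ≤ 2 * δ ∧ infDist (B⁻¹ x) (Set.range LB) ≤ 2 * δ)
    (xA xB : X) (hxA : xA ∈ Set.range LA) (hxB : xB ∈ Set.range LB)
    (hmin : ∀ p ∈ Set.range LA, ∀ q ∈ Set.range LB, dist xA xB ≤ dist p q)
    (hfar : dist xA xB > 50 * δ)
    (lA lB lAB : ℝ)
    (hlA : Tendsto (fun n : ℕ => dist ((A ^ n) x₀) x₀ / n) atTop (𝓝 lA))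
    (hlB : Tendsto (fun n : ℕ => dist ((B ^ n) x₀) x₀ / n) atTop (𝓝 lB))
    (hlAB : Tendsto (fun n : ℕ => dist (((A * B) ^ n) x₀) x₀ / n) atTop (𝓝 lAB))
    (hlA50 : lA > 50 * δ) (hlB50 : lB > 50 * δ) :
    lA + lB - 144 * δ ≤ lAB := by
  have hyp4 := four_point hδ hgeo hhyp
  have hminA : ∀ q ∈ Set.range LA, dist xA xB ≤ dist q xB := fun q hq => hmin q hq xB hxB
  have hminB : ∀ q ∈ Set.range LB, dist xB xA ≤ dist q xA := by
    intro q hq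
    rw [dist_comm xB xA, dist_comm q xA]
    exact hmin xA hxA q hq
  have hbrA : ∀ u ∈ Set.range LA, gromovProd xB u xA ≤ 3 * δ :=
    fun u hu => bridge0 hδ hgeo hhyp hLA hxA xB hminA hu
  have hbrB : ∀ v ∈ Set.range LB, gromovProd xA v xB ≤ 3 * δ :=
    fun v hv => bridge0 hδ hgeo hhyp hLB hxB xA hminB hv
  have bridgeA : ∀ u v : X, infDist u (Set.range LA) ≤ 2 * δ →
      infDist v (Set.range LB) ≤ 2 * δ → gromovProd u v xA ≤ 10 * δ :=
    fun u v hu hv => bridge_generic hδ hyp4 hxA hxB hbrA hbrB hfar hu hv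
  have bridgeB : ∀ u v : X, infDist u (Set.range LB) ≤ 2 * δ →
      infDist v (Set.range LA) ≤ 2 * δ → gromovProd u v xB ≤ 10 * δ :=
    fun u v hu hv => bridge_generic hδ hyp4 hxB hxA hbrB hbrA
      (by rw [dist_comm]; exact hfar) hu hv
  have hxAd : infDist xA (Set.range LA) ≤ 2 * δ := by
    rw [infDist_zero_of_mem hxA]; linarith
  have hxBd : infDist xB (Set.range LB) ≤ 2 * δ := by
    rw [infDist_zero_of_mem hxB]; linarith
  have hAxA := (hAinv xA hxA).1
  have hAixA := (hAinv xA hxA).2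
  have hBxB := (hBinv xB hxB).1
  have hBixB := (hBinv xB hxB).2
  set a := dist xA (A xA) with ha
  set b := dist xB (B xB) with hb
  have haA : lA ≤ a := stable_norm_le A x₀ xA hlA
  have hbB : lB ≤ b := stable_norm_le B x₀ xB hlB
  set D := dist xA xB with hD
  set p : ℕ → X := fun j => ((A * B) ^ (j / 4))
    (if j % 4 = 0 then xB else if j % 4 = 1 then xA else if j % 4 = 2 then A xA else A xB)
    with hp
  have hq0 : ∀ k, p (4 * k) = ((A * B) ^ k) xB := by
    intro k
    have e1 : 4 * k / 4 = k := by omega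
    have e2 : (4 * k) % 4 = 0 := by omega
    simp [hp, e1, e2]
  have hq1 : ∀ k, p (4 * k + 1) = ((A * B) ^ k) xA := by
    intro k
    have e1 : (4 * k + 1) / 4 = k := by omega
    have e2 : (4 * k + 1) % 4 = 1 := by omega
    simp [hp, e1, e2]
  have hq2 : ∀ k, p (4 * k + 2) = ((A * B) ^ k) (A xA) := by
    intro k
    have e1 : (4 * k + 2) / 4 = k := by omega
    have e2 : (4 * k + 2) % 4 = 2 := by omega
    simp [hp, e1, e2]
  have hq3 : ∀ k, p (4 * k + 3) = ((A * B) ^ k) (A xB) := by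
    intro k
    have e1 : (4 * k + 3) / 4 = k := by omega
    have e2 : (4 * k + 3) % 4 = 3 := by omega
    simp [hp, e1, e2]
  have hq4 : ∀ k, p (4 * k + 4) = ((A * B) ^ k) (A (B xB)) := by
    intro k
    have e0 : 4 * k + 4 = 4 * (k + 1) := by ring
    rw [e0, hq0, pow_succ]
    rfl
  have hq5 : ∀ k, p (4 * k + 5) = ((A * B) ^ k) (A (B xA)) := by
    intro k
    have e0 : 4 * k + 5 = 4 * (k + 1) + 1 := by ring
    rw [e0, hq1, pow_succ]
    rfl
  -- distances
  have hd0 : ∀ k, dist (p (4 * k)) (p (4 * k + 1)) = D := by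
    intro k; rw [hq0, hq1, ((A * B) ^ k).dist_eq, dist_comm]
  have hd1 : ∀ k, dist (p (4 * k + 1)) (p (4 * k + 2)) = a := by
    intro k; rw [hq1, hq2, ((A * B) ^ k).dist_eq]
  have hd2 : ∀ k, dist (p (4 * k + 2)) (p (4 * k + 3)) = D := by
    intro k; rw [hq2, hq3, ((A * B) ^ k).dist_eq, A.dist_eq]
  have hd3 : ∀ k, dist (p (4 * k + 3)) (p (4 * k + 4)) = b := by
    intro k; rw [hq3, hq4, ((A * B) ^ k).dist_eq, A.dist_eq]
  -- Gromov product bounds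
  have hg0 : ∀ k, gromovProd (p (4 * k)) (p (4 * k + 2)) (p (4 * k + 1)) ≤ 10 * δ := by
    intro k
    rw [hq0, hq1, hq2, gromovProd_iso, gromovProd_comm]
    exact bridgeA _ _ hAxA hxBd
  have hg1 : ∀ k, gromovProd (p (4 * k + 1)) (p (4 * k + 3)) (p (4 * k + 2)) ≤ 10 * δ := by
    intro k
    rw [hq1, hq2, hq3, gromovProd_iso]
    have e1 : gromovProd xA (A xB) (A xA) = gromovProd (A⁻¹ xA) xB xA := by
      have h := gromovProd_iso A (A⁻¹ xA) xB xA
      simpa using h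
    rw [e1]
    exact bridgeA _ _ hAixA hxBd
  have hg2 : ∀ k, gromovProd (p (4 * k + 2)) (p (4 * k + 4)) (p (4 * k + 3)) ≤ 10 * δ := by
    intro k
    rw [hq2, hq3, hq4, gromovProd_iso, gromovProd_iso A, gromovProd_comm]
    exact bridgeB _ _ hBxB hxAd
  have hg3 : ∀ k, gromovProd (p (4 * k + 3)) (p (4 * k + 5)) (p (4 * k + 4)) ≤ 10 * δ := by
    intro k
    rw [hq3, hq4, hq5, gromovProd_iso, gromovProd_iso A]
    have e1 : gromovProd xB (B xA) (B xB) = gromovProd (B⁻¹ xB) xA xB := by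
      have h := gromovProd_iso B (B⁻¹ xB) xA xB
      simpa using h
    rw [e1]
    exact bridgeB _ _ hBixB hxAd
  -- chain hypotheses for m = 4n
  have hdall : ∀ n : ℕ, ∀ i, i + 1 ≤ 4 * n →
      2 * (10 * δ) + 2 * (3 * δ) < dist (p i) (p (i + 1)) := by
    intro n i _
    have hcase : i % 4 = 0 ∨ i % 4 = 1 ∨ i % 4 = 2 ∨ i % 4 = 3 := by omega
    rcases hcase with hc | hc | hc | hc
    · rw [show i = 4 * (i / 4) by omega, show 4 * (i / 4) + 1 = 4 * (i / 4) + 1 from rfl, hd0]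
      linarith
    · rw [show i = 4 * (i / 4) + 1 by omega, show 4 * (i / 4) + 1 + 1 = 4 * (i / 4) + 2 by omega,
        hd1]
      linarith
    · rw [show i = 4 * (i / 4) + 2 by omega, show 4 * (i / 4) + 2 + 1 = 4 * (i / 4) + 3 by omega,
        hd2]
      linarith
    · rw [show i = 4 * (i / 4) + 3 by omega, show 4 * (i / 4) + 3 + 1 = 4 * (i / 4) + 4 by omega,
        hd3]
      linarith
  have hprodall : ∀ n : ℕ, ∀ i, i + 2 ≤ 4 * n →
      gromovProd (p i) (p (i + 2)) (p (i + 1)) ≤ 10 * δ := by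
    intro n i _
    have hcase : i % 4 = 0 ∨ i % 4 = 1 ∨ i % 4 = 2 ∨ i % 4 = 3 := by omega
    rcases hcase with hc | hc | hc | hc
    · rw [show i = 4 * (i / 4) by omega, show 4 * (i / 4) + 2 = 4 * (i / 4) + 2 from rfl]
      exact hg0 _
    · rw [show i = 4 * (i / 4) + 1 by omega, show 4 * (i / 4) + 1 + 2 = 4 * (i / 4) + 3 by omega,
        show 4 * (i / 4) + 1 + 1 = 4 * (i / 4) + 2 by omega]
      exact hg1 _
    · rw [show i = 4 * (i / 4) + 2 by omega, show 4 * (i / 4) + 2 + 2 = 4 * (i / 4) + 4 by omega,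
        show 4 * (i / 4) + 2 + 1 = 4 * (i / 4) + 3 by omega]
      exact hg2 _
    · rw [show i = 4 * (i / 4) + 3 by omega, show 4 * (i / 4) + 3 + 2 = 4 * (i / 4) + 5 by omega,
        show 4 * (i / 4) + 3 + 1 = 4 * (i / 4) + 4 by omega]
      exact hg3 _
  have hsum : ∀ n : ℕ, ∑ i ∈ Finset.range (4 * n), dist (p i) (p (i + 1))
      = n * (2 * D + a + b) := by
    intro n
    induction n with
    | zero => simp
    | succ n ih =>
      rw [show 4 * (n + 1) = 4 * n + 1 + 1 + 1 + 1 by ring, Finset.sum_range_succ,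
        Finset.sum_range_succ, Finset.sum_range_succ, Finset.sum_range_succ, ih,
        show 4 * n + 1 + 1 = 4 * n + 2 by omega, show 4 * n + 1 + 1 + 1 = 4 * n + 3 by omega,
        show 4 * n + 1 + 1 + 1 + 1 = 4 * n + 4 by omega, hd0, hd1, hd2, hd3]
      push_cast
      ring
  -- apply the chain lemma
  have hchain : ∀ n : ℕ, (n : ℝ) * (2 * D + a + b) - 2 * (4 * n : ℕ) * (10 * δ + 3 * δ)
      ≤ dist xB (((A * B) ^ n) xB) := by
    intro n
    have := chain_lemma (by linarith) (by linarith) hyp4 p (4 * n) (hdall n) (hprodall n)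
    rw [hsum n] at this
    have e0 : p 0 = xB := by
      have := hq0 0
      simpa using this
    have e1 : p (4 * n) = ((A * B) ^ n) xB := hq0 n
    rw [e0, e1] at this
    exact this
  -- pass to the limit
  set c := dist x₀ xB with hc
  have hlow : ∀ᶠ n : ℕ in atTop,
      (2 * D + a + b - 104 * δ) - 2 * c / n ≤ dist (((A * B) ^ n) x₀) x₀ / n := by
    filter_upwards [eventually_ge_atTop 1] with n hn
    have hn0 : (0:ℝ) < n := by exact_mod_cast hn
    have hnne : (n:ℝ) ≠ 0 := ne_of_gt hn0
    have hb2 : (n : ℝ) * (2 * D + a + b) - 104 * δ * n - 2 * c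
        ≤ dist (((A * B) ^ n) x₀) x₀ := by
      have tri := dist_triangle4 xB x₀ (((A * B) ^ n) x₀) (((A * B) ^ n) xB)
      have hiso : dist (((A * B) ^ n) x₀) (((A * B) ^ n) xB) = dist x₀ xB :=
        ((A * B) ^ n).dist_eq _ _
      have c1 : dist xB x₀ = dist x₀ xB := dist_comm _ _
      have c2 : dist x₀ (((A * B) ^ n) x₀) = dist (((A * B) ^ n) x₀) x₀ := dist_comm _ _
      have hch := hchain n
      push_cast at hch
      linarith
    rw [le_div_iff₀ hn0]
    have hexp : ((2 * D + a + b - 104 * δ) - 2 * c / n) * n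
        = (n : ℝ) * (2 * D + a + b) - 104 * δ * n - 2 * c := by field_simp
    rw [hexp]
    linarith
  have h2 : Tendsto (fun n : ℕ => (2 * D + a + b - 104 * δ) - 2 * c / n) atTop
      (𝓝 ((2 * D + a + b - 104 * δ) - 0)) :=
    tendsto_const_nhds.sub (tendsto_const_div_atTop_nhds_zero_nat _)
  have hfinal := le_of_tendsto_of_tendsto h2 hlAB hlow
  have : 2 * D + a + b - 104 * δ ≤ lAB := by simpa using hfinal
  linarith
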